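/- Every θ ∈ ⟨φ, Aff_3(k)⟩ \ Aff_3(k) can be written as θ = α_0 ∘ φ_{u_1} ∘ α_1 ∘ φ_{u_2} ∘ ··· ∘ φ_{u_{s-1}} ∘ α_{s-1} ∘ φ_{u_s} ∘ α_s, where s ≥ 1, u_1,...,u_s ∈ k^*, α_0, α_s ∈ Aff_3(k), and α_1,...,α_{s-1} ∈ Aff_3(k) \ B. -/

import Mathlib

open MvPolynomial

noncomputable section

namespace YasudaPaper

variable {k : Type*} [Field k]

/-- `f := x1*x3 - x2^2` (variables: `X 0 = x1, X 1 = x2, X 2 = x3`). -/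
def fP : MvPolynomial (Fin 3) k := X 0 * X 2 - X 1 ^ 2

/-- `r := x2*f + x1^2`. -/
def rP : MvPolynomial (Fin 3) k := X 1 * fP + X 0 ^ 2

/-- `g := x3*f^2 + 2*x1*x2*f + x1^3`. -/
def gP : MvPolynomial (Fin 3) k := X 2 * fP ^ 2 + 2 * X 0 * X 1 * fP + X 0 ^ 3

/-- The Jacobian derivation `Δ = Δ_{(f,g)}`, `h ↦ det ∂(f,g,h)/∂(x1,x2,x3)`. -/
def Del (h : MvPolynomial (Fin 3) k) : MvPolynomial (Fin 3) k :=
  Matrix.det !![pderiv 0 fP, pderiv 1 fP, pderiv 2 fP;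
                pderiv 0 gP, pderiv 1 gP, pderiv 2 gP;
                pderiv 0 h,  pderiv 1 h,  pderiv 2 h]

/-- `φ = exp D`: for every `h` and every `N` with `D^[N] h = 0`,
    `φ h = ∑_{i<N} D^i(h)/i!`.  (For a locally nilpotent `D` this characterizes
    the exponential automorphism.) -/
def IsExpOf {σ : Type*} (D : MvPolynomial σ k → MvPolynomial σ k)
    (φ : MvPolynomial σ k ≃ₐ[k] MvPolynomial σ k) : Prop :=
  ∀ (h : MvPolynomial σ k) (N : ℕ), D^[N] h = 0 →
    φ h = ∑ i ∈ Finset.range N, (Nat.factorial i : k)⁻¹ • D^[i] h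

/-- `α` is an affine automorphism: `α(x_i) = ∑_j a_{j,i} x_j + b_i` with `A ∈ GL₃(k)`. -/
def IsAffine (α : MvPolynomial (Fin 3) k ≃ₐ[k] MvPolynomial (Fin 3) k) : Prop :=
  ∃ (A : Matrix (Fin 3) (Fin 3) k) (b : Fin 3 → k), IsUnit A.det ∧
    ∀ i : Fin 3, α (X i) = (∑ j : Fin 3, C (A j i) * X j) + C (b i)

/-- `Aff_3(k)` as a set of automorphisms. -/
def AffSet : Set (MvPolynomial (Fin 3) k ≃ₐ[k] MvPolynomial (Fin 3) k) := {α | IsAffine α}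

/-- `α` is a triangular automorphism: `α(x_i) = a_i x_i + f_i(x_1,…,x_{i-1})`, `a_i ≠ 0`. -/
def IsTriangular (α : MvPolynomial (Fin 3) k ≃ₐ[k] MvPolynomial (Fin 3) k) : Prop :=
  ∃ (a : Fin 3 → k) (p : Fin 3 → MvPolynomial (Fin 3) k),
    (∀ i, a i ≠ 0) ∧ (∀ i, p i ∈ MvPolynomial.supported k {j | j < i}) ∧
    (∀ i, α (X i) = C (a i) * X i + p i)

/-- `BA_3(k)` as a set of automorphisms. -/
def TriSet : Set (MvPolynomial (Fin 3) k ≃ₐ[k] MvPolynomial (Fin 3) k) := {α | IsTriangular α}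

/-- The tame subgroup `TA_3(k) = ⟨Aff_3(k), BA_3(k)⟩`. -/
def TA : Subgroup (MvPolynomial (Fin 3) k ≃ₐ[k] MvPolynomial (Fin 3) k) :=
  Subgroup.closure (AffSet ∪ TriSet)

/-- `β = β_u = (u^3 x1, u^2 x2, u x3)`. -/
def IsBeta (u : k) (β : MvPolynomial (Fin 3) k ≃ₐ[k] MvPolynomial (Fin 3) k) : Prop :=
  β (X 0) = C (u ^ 3) * X 0 ∧ β (X 1) = C (u ^ 2) * X 1 ∧ β (X 2) = C u * X 2

/-- `B = {β_u | u ∈ k^*}`. -/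
def BSet : Set (MvPolynomial (Fin 3) k ≃ₐ[k] MvPolynomial (Fin 3) k) :=
  {β | ∃ u : k, u ≠ 0 ∧ IsBeta u β}

/-! Six-variable ring `k[x1,x2,x3,t_r,t_f,t_g]`:
variables `X 0 = x1, X 1 = x2, X 2 = x3, X 3 = t_r, X 4 = t_f, X 5 = t_g`. -/

/-- The inclusion of variable index sets. -/
def ι36 : Fin 3 → Fin 6 := Fin.castLE (by norm_num)

/-- The embedding `k[x1,x2,x3] → k[x1,x2,x3,t_r,t_f,t_g]`. -/
def embP : MvPolynomial (Fin 3) k →ₐ[k] MvPolynomial (Fin 6) k := rename ι36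

/-- The substitution map `π : t_r ↦ r, t_f ↦ f, t_g ↦ g` (fixing `x1,x2,x3`). -/
def piMap : MvPolynomial (Fin 6) k →ₐ[k] MvPolynomial (Fin 3) k :=
  aeval ![X 0, X 1, X 2, rP, fP, gP]

/-- The triangular derivation
`Δ' = -2 t_r t_f ∂/∂x1 + (4 x1 t_r - t_g) ∂/∂x2 + (6 x2 t_r + 2 t_f²) ∂/∂x3 - t_f t_g ∂/∂t_r`. -/
def Del' (p : MvPolynomial (Fin 6) k) : MvPolynomial (Fin 6) k :=
  (-(2 * X 3 * X 4)) * pderiv 0 p + (4 * X 0 * X 3 - X 5) * pderiv 1 p +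
  (6 * X 1 * X 3 + 2 * X 4 ^ 2) * pderiv 2 p + (-(X 4 * X 5)) * pderiv 3 p

/-- The weight `w1 = (1,2,3,1,0,1)`. -/
def w1 : Fin 6 → ℕ := ![1, 2, 3, 1, 0, 1]

/-- The weight `w2 = (0,0,0,0,1,0)`. -/
def w2 : Fin 6 → ℕ := ![0, 0, 0, 0, 1, 0]

/-- The sixth cyclic lexicographic order on exponent vectors: first compare the
exponent of `t_g`, then lexicographically the exponents of `x1,x2,x3,t_r,t_f`. -/
def cyclicLt (a b : Fin 6 →₀ ℕ) : Prop :=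
  a 5 < b 5 ∨ (a 5 = b 5 ∧ ∃ m : Fin 5,
    (∀ l : Fin 5, l < m → a l.castSucc = b l.castSucc) ∧ a m.castSucc < b m.castSucc)

/-- The leading monomial of `p` (for the sixth cyclic lexicographic order) is `m`. -/
def LeadMonIs (p : MvPolynomial (Fin 6) k) (m : Fin 6 →₀ ℕ) : Prop :=
  m ∈ p.support ∧ ∀ m' ∈ p.support, m' ≠ m → cyclicLt m' m

/-- The exponent vector of the monomial `t_f^δ t_g^γ`. -/
def tfMon (γ δ : ℕ) : Fin 6 →₀ ℕ := Finsupp.single 4 δ + Finsupp.single 5 γ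

/-- The set `P_{γ,δ}`. -/
def Pset (γ δ : ℕ) : Set (MvPolynomial (Fin 6) k) :=
  {p | p ≠ 0 ∧ weightedTotalDegree w1 p ≤ γ ∧ weightedTotalDegree w2 p ≤ δ ∧
    LeadMonIs p (tfMon γ δ)}

/-- `α'` is a lift of `α`. -/
def IsLift (α : MvPolynomial (Fin 3) k ≃ₐ[k] MvPolynomial (Fin 3) k)
    (α' : MvPolynomial (Fin 6) k →ₐ[k] MvPolynomial (Fin 6) k) : Prop :=
  (∀ i : Fin 3, α' (X (ι36 i)) = embP (α (X i))) ∧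
  (∀ p, piMap (α' p) = α (piMap p))

/-- `t = γ_j = max {i | a_{i,j} ≠ 0}` (with rows indexed `1,2,3`). -/
def TypeIs (A : Matrix (Fin 3) (Fin 3) k) (j : Fin 3) (t : ℕ) : Prop :=
  ∃ i : Fin 3, t = (i : ℕ) + 1 ∧ A i j ≠ 0 ∧ ∀ i' : Fin 3, i < i' → A i' j = 0

/-- Condition (C) for a lift `α'` of an affine automorphism of type `(γ1,γ2,γ3)`,
relative to `φ' = exp(uΔ')`. -/
def CondC (γ1 γ2 γ3 : ℕ) (φ' : MvPolynomial (Fin 6) k ≃ₐ[k] MvPolynomial (Fin 6) k)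
    (α' : MvPolynomial (Fin 6) k →ₐ[k] MvPolynomial (Fin 6) k) : Prop :=
  ∃ m4 m5 m6 n4 n5 n6 : ℕ,
    1 ≤ n4 ∧ 1 ≤ n5 ∧ 1 ≤ n6 ∧
    φ' (α' (X 3)) ∈ Pset m4 n4 ∧
    φ' (α' (X 4)) ∈ Pset m5 n5 ∧
    φ' (α' (X 5)) ∈ Pset m6 n6 ∧
    γ1 ≤ m6 ∧ γ2 ≤ 2 * m6 ∧ γ3 ≤ 3 * m6 ∧ m4 ≤ m6 ∧
    γ1 + 1 ≤ n6 - 1 ∧ γ2 + 1 ≤ 2 * (n6 - 1) ∧ γ3 + 1 ≤ 3 * (n6 - 1) ∧ n4 ≤ n6 - 1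

/-- The image of `x_j` under the affine map given by `(A, d)`, inside the six-variable ring. -/
def affImg (A : Matrix (Fin 3) (Fin 3) k) (d : Fin 3 → k) (j : Fin 3) :
    MvPolynomial (Fin 6) k :=
  (∑ i : Fin 3, C (A i j) * X (ι36 i)) + C (d j)

/-- The image of `t_f` under the lift `α̂`:
`α̂(t_f) = α(f) + (a_{1,1}a_{3,3} - 2a_{1,2}a_{3,2} + a_{1,3}a_{3,1})(t_f - f)`. -/
def hatTf (A : Matrix (Fin 3) (Fin 3) k) (d : Fin 3 → k) : MvPolynomial (Fin 6) k :=
  (affImg A d 0 * affImg A d 2 - affImg A d 1 ^ 2) +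
    C (A 0 0 * A 2 2 - 2 * (A 0 1 * A 2 1) + A 0 2 * A 2 0) *
      (X 4 - (X 0 * X 2 - X 1 ^ 2))

/-- The lift `α̂` of the affine automorphism given by `(A, d)`:
`α̂(x_i) = α(x_i)`, `α̂(t_f)` as in `hatTf`, `α̂(t_r) = α̂(x2 t_f + x1²)`,
`α̂(t_g) = α̂(x3 t_f² + 2 x1 x2 t_f + x1³)`. -/
def hatLift (A : Matrix (Fin 3) (Fin 3) k) (d : Fin 3 → k) :
    MvPolynomial (Fin 6) k →ₐ[k] MvPolynomial (Fin 6) k :=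
  aeval ![affImg A d 0, affImg A d 1, affImg A d 2,
    affImg A d 1 * hatTf A d + affImg A d 0 ^ 2,
    hatTf A d,
    affImg A d 2 * hatTf A d ^ 2 + 2 * affImg A d 0 * affImg A d 1 * hatTf A d +
      affImg A d 0 ^ 3]


/-! ### Auxiliary lemmas -/

section Aux

lemma Del_add (p q : MvPolynomial (Fin 3) k) : Del (p + q) = Del p + Del q := by
  simp [Del, Matrix.det_fin_three]
  ring

lemma Del_mul (p q : MvPolynomial (Fin 3) k) : Del (p * q) = p * Del q + q * Del p := by
  simp [Del, Matrix.det_fin_three, pderiv_mul]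
  ring

lemma Del_C (a : k) : Del (C a : MvPolynomial (Fin 3) k) = 0 := by
  simp [Del, Matrix.det_fin_three]

lemma Del_zero : Del (0 : MvPolynomial (Fin 3) k) = 0 := by
  simpa using Del_C (0 : k)

lemma Del_smul (u : k) (p : MvPolynomial (Fin 3) k) : Del (u • p) = u • Del p := by
  rw [smul_eq_C_mul, Del_mul, Del_C, smul_eq_C_mul]; ring

lemma Del_C_mul (a : k) (p : MvPolynomial (Fin 3) k) : Del (C a * p) = C a * Del p := by
  rw [Del_mul, Del_C]; ring

lemma pderiv_two (i : Fin 3) : pderiv i (2 : MvPolynomial (Fin 3) k) = 0 := by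
  rw [← map_ofNat (C : k →+* MvPolynomial (Fin 3) k) 2]; exact pderiv_C

lemma pd_fP_0 : pderiv 0 (fP : MvPolynomial (Fin 3) k) = X 2 := by
  simp [fP, pderiv_X_self, pderiv_X_of_ne (by decide : (1:Fin 3) ≠ 0),
    pderiv_X_of_ne (by decide : (2:Fin 3) ≠ 0)]
lemma pd_fP_1 : pderiv 1 (fP : MvPolynomial (Fin 3) k) = -(2 * X 1) := by
  simp [fP, pderiv_X_self, pderiv_X_of_ne (by decide : (0:Fin 3) ≠ 1),
    pderiv_X_of_ne (by decide : (2:Fin 3) ≠ 1)]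
lemma pd_fP_2 : pderiv 2 (fP : MvPolynomial (Fin 3) k) = X 0 := by
  simp [fP, pderiv_X_self, pderiv_X_of_ne (by decide : (0:Fin 3) ≠ 2),
    pderiv_X_of_ne (by decide : (1:Fin 3) ≠ 2)]

lemma pd_gP_0 : pderiv 0 (gP : MvPolynomial (Fin 3) k)
    = 2 * X 2 ^ 2 * fP + 2 * X 1 * fP + 2 * X 0 * X 1 * X 2 + 3 * X 0 ^ 2 := by
  simp [gP, pderiv_mul, pderiv_pow, pderiv_two, pd_fP_0, pderiv_X_self,
    pderiv_X_of_ne (by decide : (1:Fin 3) ≠ 0), pderiv_X_of_ne (by decide : (2:Fin 3) ≠ 0)]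
  ring
lemma pd_gP_1 : pderiv 1 (gP : MvPolynomial (Fin 3) k)
    = -(4 * X 1 * X 2 * fP) + 2 * X 0 * fP - 4 * X 0 * X 1 ^ 2 := by
  simp [gP, pderiv_mul, pderiv_pow, pderiv_two, pd_fP_1, pderiv_X_self,
    pderiv_X_of_ne (by decide : (0:Fin 3) ≠ 1), pderiv_X_of_ne (by decide : (2:Fin 3) ≠ 1)]
  ring
lemma pd_gP_2 : pderiv 2 (gP : MvPolynomial (Fin 3) k)
    = fP ^ 2 + 2 * X 0 * X 2 * fP + 2 * X 0 ^ 2 * X 1 := by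
  simp [gP, pderiv_mul, pderiv_pow, pderiv_two, pd_fP_2, pderiv_X_self,
    pderiv_X_of_ne (by decide : (0:Fin 3) ≠ 2), pderiv_X_of_ne (by decide : (1:Fin 3) ≠ 2)]
  ring

lemma Del_X0 : Del (X 0 : MvPolynomial (Fin 3) k) = -(2 * fP * (X 1 * fP + X 0 ^ 2)) := by
  simp [Del, Matrix.det_fin_three, pd_fP_0, pd_fP_1, pd_fP_2, pd_gP_0, pd_gP_1, pd_gP_2,
    pderiv_X_self, pderiv_X_of_ne (by decide : (0:Fin 3) ≠ 1),
    pderiv_X_of_ne (by decide : (0:Fin 3) ≠ 2)]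
  ring
lemma Del_X1 : Del (X 1 : MvPolynomial (Fin 3) k)
    = -(X 2 * fP ^ 2) + 2 * X 0 * X 1 * fP + 3 * X 0 ^ 3 := by
  simp [Del, Matrix.det_fin_three, pd_fP_0, pd_fP_1, pd_fP_2, pd_gP_0, pd_gP_1, pd_gP_2,
    pderiv_X_self, pderiv_X_of_ne (by decide : (1:Fin 3) ≠ 0),
    pderiv_X_of_ne (by decide : (1:Fin 3) ≠ 2)]
  ring
lemma Del_X2 : Del (X 2 : MvPolynomial (Fin 3) k)
    = 2 * fP * (X 0 * X 2 + 2 * X 1 ^ 2) + 6 * X 0 ^ 2 * X 1 := by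
  simp [Del, Matrix.det_fin_three, pd_fP_0, pd_fP_1, pd_fP_2, pd_gP_0, pd_gP_1, pd_gP_2,
    pderiv_X_self, pderiv_X_of_ne (by decide : (2:Fin 3) ≠ 0),
    pderiv_X_of_ne (by decide : (2:Fin 3) ≠ 1)]
  ring

lemma beta_fP {v : k} {β : MvPolynomial (Fin 3) k ≃ₐ[k] MvPolynomial (Fin 3) k}
    (hβ : IsBeta v β) : β fP = C (v ^ 4) * fP := by
  simp only [fP, map_sub, map_mul, map_pow, hβ.1, hβ.2.1, hβ.2.2, map_pow (C : k →+* _)]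
  ring

lemma beta_Del {v : k} {β : MvPolynomial (Fin 3) k ≃ₐ[k] MvPolynomial (Fin 3) k}
    (hβ : IsBeta v β) (h : MvPolynomial (Fin 3) k) :
    β (Del h) = C (v ^ 7) * Del (β h) := by
  induction h using MvPolynomial.induction_on with
  | C a =>
    have hca : β (C a) = C a := by
      rw [← MvPolynomial.algebraMap_eq]; exact β.commutes a
    rw [Del_C, map_zero, hca, Del_C, mul_zero]
  | add p q hp hq => rw [Del_add, map_add, hp, hq, map_add, Del_add]; ring
  | mul_X p j hp =>
    have hX : β (Del (X j)) = C (v ^ 7) * Del (β (X j)) := by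
      fin_cases j
      · show β (Del (X 0)) = C (v ^ 7) * Del (β (X 0))
        rw [hβ.1, Del_X0, Del_C_mul, Del_X0]
        simp only [map_neg, map_mul, map_add, map_pow, beta_fP hβ, hβ.1, hβ.2.1,
          map_pow (C : k →+* _), map_ofNat]
        ring
      · show β (Del (X 1)) = C (v ^ 7) * Del (β (X 1))
        rw [hβ.2.1, Del_X1, Del_C_mul, Del_X1]
        simp only [map_neg, map_mul, map_add, map_pow, beta_fP hβ, hβ.1, hβ.2.1, hβ.2.2,
          map_pow (C : k →+* _), map_ofNat]
        ring
      · show β (Del (X 2)) = C (v ^ 7) * Del (β (X 2))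
        rw [hβ.2.2, Del_X2, Del_C_mul, Del_X2]
        simp only [map_neg, map_mul, map_add, map_pow, beta_fP hβ, hβ.1, hβ.2.1, hβ.2.2,
          map_pow (C : k →+* _), map_ofNat]
        ring
    rw [Del_mul, map_add, map_mul, map_mul, hp, hX, map_mul, Del_mul]
    ring

end Aux


section Phi

lemma iter_smul (u : k) (i : ℕ) (h : MvPolynomial (Fin 3) k) :
    (fun h => u • Del h)^[i] h = u ^ i • Del^[i] h := by
  induction i generalizing h with
  | zero => simp
  | succ n ih =>
    rw [Function.iterate_succ_apply', Function.iterate_succ_apply', ih, Del_smul,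
      smul_smul, pow_succ, mul_comm]

lemma Del_iter_zero_of_le {h : MvPolynomial (Fin 3) k} {N : ℕ} (hN : Del^[N] h = 0)
    {m : ℕ} (hm : N ≤ m) : Del^[m] h = 0 := by
  obtain ⟨d, rfl⟩ := Nat.exists_eq_add_of_le hm
  rw [add_comm, Function.iterate_add_apply, hN]
  exact Function.iterate_fixed Del_zero d

variable {Φ : k → (MvPolynomial (Fin 3) k ≃ₐ[k] MvPolynomial (Fin 3) k)}

lemma Phi_apply (hΦ : ∀ u : k, IsExpOf (fun h => u • Del h) (Φ u)) (u : k)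
    (h : MvPolynomial (Fin 3) k) (N : ℕ) (hN : Del^[N] h = 0) :
    Φ u h = ∑ i ∈ Finset.range N, ((Nat.factorial i : k)⁻¹ * u ^ i) • Del^[i] h := by
  rw [hΦ u h N (by rw [iter_smul, hN, smul_zero])]
  refine Finset.sum_congr rfl fun i _ => ?_
  rw [iter_smul, smul_smul]

lemma cauchy_coeff [CharZero k] (u v : k) (n : ℕ) :
    ∑ p ∈ Finset.HasAntidiagonal.antidiagonal n, ((Nat.factorial p.1 : k)⁻¹ * u ^ p.1) *
      ((Nat.factorial p.2 : k)⁻¹ * v ^ p.2)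
    = (Nat.factorial n : k)⁻¹ * (u + v) ^ n := by
  rw [Finset.Nat.sum_antidiagonal_eq_sum_range_succ_mk, add_pow, Finset.mul_sum]
  refine Finset.sum_congr rfl fun i hi => ?_
  rw [Finset.mem_range, Nat.lt_succ_iff] at hi
  rw [Nat.cast_choose k hi]
  have h1 : (Nat.factorial i : k) ≠ 0 := Nat.cast_ne_zero.2 (Nat.factorial_ne_zero i)
  have h2 : (Nat.factorial (n - i) : k) ≠ 0 := Nat.cast_ne_zero.2 (Nat.factorial_ne_zero _)
  have h3 : (Nat.factorial n : k) ≠ 0 := Nat.cast_ne_zero.2 (Nat.factorial_ne_zero n)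
  field_simp

lemma Phi_mul [CharZero k] (hΦ : ∀ u : k, IsExpOf (fun h => u • Del h) (Φ u))
    (hln : ∀ h : MvPolynomial (Fin 3) k, ∃ l : ℕ, Del^[l] h = 0) (u v : k) :
    Φ u * Φ v = Φ (u + v) := by
  refine AlgEquiv.ext fun h => ?_
  obtain ⟨N, hN⟩ := hln h
  set c : k → ℕ → k := fun w i => (Nat.factorial i : k)⁻¹ * w ^ i with hc
  set T : ℕ → MvPolynomial (Fin 3) k := fun i => Del^[i] h with hT
  have hTz : ∀ m, N ≤ m → T m = 0 := fun m hm => Del_iter_zero_of_le hN hm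
  have key : (Φ u) ((Φ v) h) = ∑ p ∈ Finset.range N ×ˢ Finset.range N,
      (c v p.1 * c u p.2) • T (p.1 + p.2) := by
    rw [Phi_apply hΦ v h N hN, map_sum, Finset.sum_product]
    refine Finset.sum_congr rfl fun i _ => ?_
    rw [map_smul, Phi_apply hΦ u (Del^[i] h) N
      (by rw [← Function.iterate_add_apply]; exact Del_iter_zero_of_le hN (Nat.le_add_right _ _)),
      Finset.smul_sum]
    refine Finset.sum_congr rfl fun j _ => ?_
    rw [smul_smul, ← Function.iterate_add_apply, Nat.add_comm j i]
  have hdisj : (↑(Finset.range (2 * N)) : Set ℕ).PairwiseDisjoint Finset.HasAntidiagonal.antidiagonal := by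
    intro a _ b _ hab
    simp only [Finset.disjoint_left]
    intro p hpa hpb
    rw [Finset.HasAntidiagonal.mem_antidiagonal] at hpa hpb
    exact hab (hpa ▸ hpb ▸ rfl)
  have hsub : Finset.range N ×ˢ Finset.range N ⊆
      (Finset.range (2 * N)).biUnion Finset.HasAntidiagonal.antidiagonal := by
    intro p hp
    rw [Finset.mem_product, Finset.mem_range, Finset.mem_range] at hp
    refine Finset.mem_biUnion.2 ⟨p.1 + p.2, Finset.mem_range.2 (by omega), ?_⟩
    exact Finset.HasAntidiagonal.mem_antidiagonal.2 rfl
  rw [AlgEquiv.mul_apply, key,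
    Finset.sum_subset hsub (fun p _ hp => by
      rw [Finset.mem_product, Finset.mem_range, Finset.mem_range] at hp
      push_neg at hp
      rw [hTz _ (by omega), smul_zero]),
    Finset.sum_biUnion hdisj]
  have step : ∀ n ∈ Finset.range (2 * N),
      (∑ p ∈ Finset.HasAntidiagonal.antidiagonal n, (c v p.1 * c u p.2) • T (p.1 + p.2))
      = c (u + v) n • T n := by
    intro n _
    have h1 : ∀ p ∈ Finset.HasAntidiagonal.antidiagonal n, (c v p.1 * c u p.2) • T (p.1 + p.2)
        = (c v p.1 * c u p.2) • T n := by
      intro p hp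
      rw [Finset.HasAntidiagonal.mem_antidiagonal.1 hp]
    rw [Finset.sum_congr rfl h1, ← Finset.sum_smul, cauchy_coeff, add_comm v u]
  rw [Finset.sum_congr rfl step, Phi_apply hΦ (u + v) h N hN]
  symm
  apply Finset.sum_subset
  · intro n hn
    rw [Finset.mem_range] at hn ⊢
    omega
  · intro n _ hn
    rw [Finset.mem_range] at hn
    push_neg at hn
    rw [Del_iter_zero_of_le hN hn, smul_zero]

lemma Phi_zero (hΦ : ∀ u : k, IsExpOf (fun h => u • Del h) (Φ u))
    (hln : ∀ h : MvPolynomial (Fin 3) k, ∃ l : ℕ, Del^[l] h = 0) :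
    Φ (0 : k) = 1 := by
  refine AlgEquiv.ext fun h => ?_
  obtain ⟨N, hN⟩ := hln h
  rw [Phi_apply hΦ 0 h (N + 1) (Del_iter_zero_of_le hN (Nat.le_succ N)),
    Finset.sum_range_succ']
  simp

lemma Phi_inv [CharZero k] (hΦ : ∀ u : k, IsExpOf (fun h => u • Del h) (Φ u))
    (hln : ∀ h : MvPolynomial (Fin 3) k, ∃ l : ℕ, Del^[l] h = 0) (u : k) :
    (Φ u)⁻¹ = Φ (-u) := by
  symm
  apply eq_inv_of_mul_eq_one_left
  rw [Phi_mul hΦ hln, neg_add_cancel, Phi_zero hΦ hln]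

lemma beta_Del_iter {v : k} {β : MvPolynomial (Fin 3) k ≃ₐ[k] MvPolynomial (Fin 3) k}
    (hβ : IsBeta v β) (i : ℕ) (h : MvPolynomial (Fin 3) k) :
    β (Del^[i] h) = C ((v ^ 7) ^ i) * Del^[i] (β h) := by
  induction i generalizing h with
  | zero => simp
  | succ n ih =>
    rw [Function.iterate_succ_apply', Function.iterate_succ_apply', beta_Del hβ, ih,
      Del_C_mul, ← mul_assoc, ← C_mul, ← pow_succ']

lemma beta_comm [CharZero k] (hΦ : ∀ u : k, IsExpOf (fun h => u • Del h) (Φ u))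
    (hln : ∀ h : MvPolynomial (Fin 3) k, ∃ l : ℕ, Del^[l] h = 0)
    {v : k} {β : MvPolynomial (Fin 3) k ≃ₐ[k] MvPolynomial (Fin 3) k}
    (hβ : IsBeta v β) (hv : v ≠ 0) (u : k) :
    β * Φ u = Φ (u * v ^ 7) * β := by
  refine AlgEquiv.ext fun h => ?_
  obtain ⟨N, hN⟩ := hln h
  have hβN : Del^[N] (β h) = 0 := by
    have := beta_Del_iter hβ N h
    rw [hN, map_zero] at this
    have hC : (C (((v:k) ^ 7) ^ N) : MvPolynomial (Fin 3) k) ≠ 0 := by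
      simp [C_eq_zero, pow_ne_zero, hv]
    exact (mul_eq_zero.1 this.symm).resolve_left hC
  rw [AlgEquiv.mul_apply, AlgEquiv.mul_apply, Phi_apply hΦ u h N hN, map_sum,
    Phi_apply hΦ (u * v ^ 7) (β h) N hβN]
  refine Finset.sum_congr rfl fun i _ => ?_
  rw [map_smul, beta_Del_iter hβ, smul_eq_C_mul, smul_eq_C_mul, ← mul_assoc, ← C_mul]
  congr 2
  rw [mul_pow]
  ring

end Phi


section Affine

lemma alg_C (α : MvPolynomial (Fin 3) k ≃ₐ[k] MvPolynomial (Fin 3) k) (a : k) :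
    α (C a) = C a := by
  rw [← MvPolynomial.algebraMap_eq]; exact α.commutes a

lemma sum_one_row (i : Fin 3) :
    (∑ j : Fin 3, C ((1 : Matrix (Fin 3) (Fin 3) k) j i) * X j) = X i := by
  fin_cases i <;> simp [Fin.sum_univ_three, Matrix.one_apply]

lemma affine_one : IsAffine (1 : MvPolynomial (Fin 3) k ≃ₐ[k] MvPolynomial (Fin 3) k) := by
  refine ⟨1, 0, by simp, fun i => ?_⟩
  rw [sum_one_row]
  simp

lemma affine_apply_comb {α : MvPolynomial (Fin 3) k ≃ₐ[k] MvPolynomial (Fin 3) k}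
    {A : Matrix (Fin 3) (Fin 3) k} {b : Fin 3 → k}
    (hαX : ∀ i : Fin 3, α (X i) = (∑ j : Fin 3, C (A j i) * X j) + C (b i))
    (B : Matrix (Fin 3) (Fin 3) k) (c : Fin 3 → k) (i : Fin 3) :
    α ((∑ j : Fin 3, C (B j i) * X j) + C (c i))
      = (∑ l : Fin 3, C ((A * B) l i) * X l) + C ((∑ j : Fin 3, B j i * b j) + c i) := by
  rw [map_add, map_sum, alg_C]
  simp only [map_mul, alg_C, hαX]
  simp only [Matrix.mul_apply, Fin.sum_univ_three, C_add, C_mul]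
  ring

lemma affine_mul {α γ : MvPolynomial (Fin 3) k ≃ₐ[k] MvPolynomial (Fin 3) k}
    (hα : IsAffine α) (hγ : IsAffine γ) : IsAffine (α * γ) := by
  obtain ⟨A, b, hA, hαX⟩ := hα
  obtain ⟨G, c, hG, hγX⟩ := hγ
  refine ⟨A * G, fun i => (∑ j, G j i * b j) + c i, by rw [Matrix.det_mul]; exact hA.mul hG,
    fun i => ?_⟩
  rw [AlgEquiv.mul_apply, hγX i, affine_apply_comb hαX]

lemma affine_inv {α : MvPolynomial (Fin 3) k ≃ₐ[k] MvPolynomial (Fin 3) k}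
    (hα : IsAffine α) : IsAffine α⁻¹ := by
  obtain ⟨A, b, hA, hαX⟩ := hα
  refine ⟨A⁻¹, fun i => -∑ j, A⁻¹ j i * b j, Matrix.isUnit_nonsing_inv_det A hA, fun i => ?_⟩
  have hcand : α ((∑ j, C (A⁻¹ j i) * X j) + C (-∑ j, A⁻¹ j i * b j)) = X i := by
    rw [affine_apply_comb hαX A⁻¹ (fun i => -∑ j, A⁻¹ j i * b j) i,
      Matrix.mul_nonsing_inv A hA, sum_one_row]
    simp
  have h2 := congrArg α.symm hcand
  rw [AlgEquiv.symm_apply_apply] at h2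
  exact h2 ▸ rfl

lemma beta_affine {v : k} {β : MvPolynomial (Fin 3) k ≃ₐ[k] MvPolynomial (Fin 3) k}
    (hβ : IsBeta v β) (hv : v ≠ 0) : IsAffine β := by
  refine ⟨Matrix.diagonal ![v ^ 3, v ^ 2, v], 0, ?_, fun i => ?_⟩
  · rw [Matrix.det_diagonal, Fin.prod_univ_three]
    refine isUnit_iff_ne_zero.2 ?_
    simp [hv]
  · fin_cases i
    · simpa [Fin.sum_univ_three, Matrix.diagonal] using hβ.1
    · simpa [Fin.sum_univ_three, Matrix.diagonal] using hβ.2.1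
    · simpa [Fin.sum_univ_three, Matrix.diagonal] using hβ.2.2

end Affine


section Main

variable [CharZero k]

/-- Product of blocks `Φ u * α`. -/
def blocks (Φ : k → (MvPolynomial (Fin 3) k ≃ₐ[k] MvPolynomial (Fin 3) k))
    (L : List (k × (MvPolynomial (Fin 3) k ≃ₐ[k] MvPolynomial (Fin 3) k))) :
    MvPolynomial (Fin 3) k ≃ₐ[k] MvPolynomial (Fin 3) k :=
  (L.map fun p => Φ p.1 * p.2).prod

/-- Normal form: `θ = α₀ · ∏ (Φ uᵢ * αᵢ)` with all `uᵢ ≠ 0` and all `αᵢ` affine. -/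
def NF (Φ : k → (MvPolynomial (Fin 3) k ≃ₐ[k] MvPolynomial (Fin 3) k))
    (θ : MvPolynomial (Fin 3) k ≃ₐ[k] MvPolynomial (Fin 3) k) : Prop :=
  ∃ α0 L, IsAffine α0 ∧ (∀ p ∈ L, p.1 ≠ 0 ∧ IsAffine p.2) ∧ θ = α0 * blocks Φ L

def GoalProp (Φ : k → (MvPolynomial (Fin 3) k ≃ₐ[k] MvPolynomial (Fin 3) k))
    (θ : MvPolynomial (Fin 3) k ≃ₐ[k] MvPolynomial (Fin 3) k) : Prop :=
  ∃ s : ℕ, 1 ≤ s ∧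
    ∃ (u : Fin s → k) (α : Fin (s + 1) → (MvPolynomial (Fin 3) k ≃ₐ[k] MvPolynomial (Fin 3) k)),
      (∀ i, u i ≠ 0) ∧
      IsAffine (α 0) ∧ IsAffine (α (Fin.last s)) ∧
      (∀ i : Fin (s + 1), 0 < (i : ℕ) → (i : ℕ) < s → IsAffine (α i) ∧ α i ∉ BSet) ∧
      θ = (List.ofFn fun i : Fin s => α i.castSucc * Φ (u i)).prod * α (Fin.last s)

variable {Φ : k → (MvPolynomial (Fin 3) k ≃ₐ[k] MvPolynomial (Fin 3) k)}

lemma blocks_nil : blocks Φ [] = 1 := rfl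

lemma blocks_cons (p) (L) : blocks Φ (p :: L) = (Φ p.1 * p.2) * blocks Φ L := by
  simp [blocks]

lemma blocks_append (L M) : blocks Φ (L ++ M) = blocks Φ L * blocks Φ M := by
  simp [blocks]

lemma blocks_concat (L) (p) : blocks Φ (L.concat p) = blocks Φ L * (Φ p.1 * p.2) := by
  rw [List.concat_eq_append, blocks_append, blocks_cons, blocks_nil, mul_one]

lemma NF_mul_affine {θ γ : MvPolynomial (Fin 3) k ≃ₐ[k] MvPolynomial (Fin 3) k}
    (h : NF Φ θ) (hγ : IsAffine γ) : NF Φ (θ * γ) := by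
  obtain ⟨α0, L, h0, hL, rfl⟩ := h
  rcases List.eq_nil_or_concat L with rfl | ⟨M, p, rfl⟩
  · exact ⟨α0 * γ, [], affine_mul h0 hγ, by simp, by simp [blocks_nil, mul_assoc]⟩
  · refine ⟨α0, M.concat (p.1, p.2 * γ), h0, ?_, ?_⟩
    · intro q hq
      rw [List.concat_eq_append, List.mem_append] at hq
      rcases hq with hq | hq
      · exact hL q (by rw [List.concat_eq_append]; exact List.mem_append_left _ hq)
      · simp only [List.mem_singleton] at hq
        subst hq
        have hp := hL p (by rw [List.concat_eq_append]; exact List.mem_append_right _ (by simp))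
        exact ⟨hp.1, affine_mul hp.2 hγ⟩
    · rw [blocks_concat, blocks_concat]
      simp only [mul_assoc]

lemma NF_mul {θ1 θ2 : MvPolynomial (Fin 3) k ≃ₐ[k] MvPolynomial (Fin 3) k}
    (h1 : NF Φ θ1) (h2 : NF Φ θ2) : NF Φ (θ1 * θ2) := by
  obtain ⟨β0, L2, hβ0, hL2, rfl⟩ := h2
  obtain ⟨α0, L1, hα0, hL1, hEq⟩ := NF_mul_affine h1 hβ0
  refine ⟨α0, L1 ++ L2, hα0, ?_, ?_⟩
  · intro p hp
    rcases List.mem_append.1 hp with hp | hp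
    exacts [hL1 p hp, hL2 p hp]
  · rw [blocks_append, ← mul_assoc, ← mul_assoc, ← hEq]

lemma revNF : ∀ (L : List (k × (MvPolynomial (Fin 3) k ≃ₐ[k] MvPolynomial (Fin 3) k))),
    (∀ p ∈ L, p.1 ≠ 0 ∧ IsAffine p.2) →
    ∀ γ, IsAffine γ → NF Φ ((L.map fun p => p.2 * Φ p.1).prod * γ) := by
  intro L
  induction L with
  | nil =>
    intro _ γ hγ
    exact ⟨γ, [], hγ, by simp, by rw [blocks_nil, mul_one, List.map_nil, List.prod_nil, one_mul]⟩
  | cons p L ih =>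
    intro hL γ hγ
    obtain ⟨β0, M, hβ0, hM, hEq⟩ := ih (fun q hq => hL q (List.mem_cons_of_mem p hq)) γ hγ
    have hp := hL p List.mem_cons_self
    refine ⟨p.2, (p.1, β0) :: M, hp.2, ?_, ?_⟩
    · intro q hq
      rcases List.mem_cons.1 hq with rfl | hq
      · exact ⟨hp.1, hβ0⟩
      · exact hM q hq
    · rw [List.map_cons, List.prod_cons, blocks_cons, mul_assoc (p.2 * Φ p.1), hEq]
      simp only [mul_assoc]

lemma blocks_inv (hΦ : ∀ u : k, IsExpOf (fun h => u • Del h) (Φ u))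
    (hln : ∀ h : MvPolynomial (Fin 3) k, ∃ l : ℕ, Del^[l] h = 0) :
    ∀ (L : List (k × (MvPolynomial (Fin 3) k ≃ₐ[k] MvPolynomial (Fin 3) k))),
    (blocks Φ L)⁻¹ =
      ((L.map fun p => ((-p.1 : k), p.2⁻¹)).reverse.map fun p => p.2 * Φ p.1).prod := by
  intro L
  induction L with
  | nil => simp [blocks_nil]
  | cons p L ih =>
    rw [blocks_cons, mul_inv_rev, ih, List.map_cons, List.reverse_cons, List.map_append,
      List.prod_append, mul_inv_rev, Phi_inv hΦ hln]
    simp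

lemma NF_inv (hΦ : ∀ u : k, IsExpOf (fun h => u • Del h) (Φ u))
    (hln : ∀ h : MvPolynomial (Fin 3) k, ∃ l : ℕ, Del^[l] h = 0)
    {θ : MvPolynomial (Fin 3) k ≃ₐ[k] MvPolynomial (Fin 3) k}
    (h : NF Φ θ) : NF Φ θ⁻¹ := by
  obtain ⟨α0, L, h0, hL, rfl⟩ := h
  rw [mul_inv_rev, blocks_inv hΦ hln]
  refine revNF _ ?_ _ (affine_inv h0)
  intro q hq
  rw [List.mem_reverse, List.mem_map] at hq
  obtain ⟨p, hp, rfl⟩ := hq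
  exact ⟨neg_ne_zero.2 (hL p hp).1, affine_inv (hL p hp).2⟩

lemma NF_closure (hΦ : ∀ u : k, IsExpOf (fun h => u • Del h) (Φ u))
    (hln : ∀ h : MvPolynomial (Fin 3) k, ∃ l : ℕ, Del^[l] h = 0)
    {θ : MvPolynomial (Fin 3) k ≃ₐ[k] MvPolynomial (Fin 3) k}
    (hθ : θ ∈ Subgroup.closure ({Φ 1} ∪ AffSet)) : NF Φ θ := by
  induction hθ using Subgroup.closure_induction with
  | mem x hx =>
    rcases hx with hx | hx
    · rw [Set.mem_singleton_iff] at hx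
      subst hx
      exact ⟨1, [((1 : k), 1)], affine_one, by simp [affine_one], by
        rw [blocks_cons, blocks_nil]; simp⟩
    · exact ⟨x, [], hx, by simp, by rw [blocks_nil, mul_one]⟩
  | one => exact ⟨1, [], affine_one, by simp, by rw [blocks_nil, mul_one]⟩
  | mul x y _ _ hx hy => exact NF_mul hx hy
  | inv x _ hx => exact NF_inv hΦ hln hx

lemma ofFn_prod_eq :
    ∀ (s : ℕ) (u : Fin s → k)
      (α : Fin (s + 1) → (MvPolynomial (Fin 3) k ≃ₐ[k] MvPolynomial (Fin 3) k)),
    (List.ofFn fun i : Fin s => α i.castSucc * Φ (u i)).prod * α (Fin.last s)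
      = α 0 * (List.ofFn fun i : Fin s => Φ (u i) * α i.succ).prod := by
  intro s
  induction s with
  | zero =>
    intro u α
    simp [Fin.last]
  | succ n ih =>
    intro u α
    rw [List.ofFn_succ, List.ofFn_succ, List.prod_cons, List.prod_cons]
    have h1 : (fun i : Fin n => α (i.succ).castSucc * Φ (u i.succ))
        = fun i : Fin n => (α ∘ Fin.succ) i.castSucc * Φ ((u ∘ Fin.succ) i) := by
      funext i
      simp only [Function.comp_apply, Fin.succ_castSucc]
    have h2 : α (Fin.last (n + 1)) = (α ∘ Fin.succ) (Fin.last n) := by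
      simp only [Function.comp_apply, Fin.succ_last]
    rw [h1, h2, mul_assoc, ih (u ∘ Fin.succ) (α ∘ Fin.succ)]
    simp only [Function.comp_apply, Fin.castSucc_zero, ← mul_assoc]

lemma blocks_as_ofFn (L : List (k × (MvPolynomial (Fin 3) k ≃ₐ[k] MvPolynomial (Fin 3) k))) :
    blocks Φ L = (List.ofFn fun i : Fin L.length => Φ (L.get i).1 * (L.get i).2).prod := by
  rw [blocks, show (L.map fun p => Φ p.1 * p.2)
    = List.ofFn fun i : Fin L.length => Φ (L.get i).1 * (L.get i).2 from by
      conv_lhs => rw [← List.ofFn_get L]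
      rw [List.map_ofFn]
      rfl]

lemma construct (L : List (k × (MvPolynomial (Fin 3) k ≃ₐ[k] MvPolynomial (Fin 3) k)))
    (hL : ∀ p ∈ L, p.1 ≠ 0 ∧ IsAffine p.2) (hne : L ≠ [])
    (hmid : ∀ (j : ℕ) (hj : j + 1 < L.length) (h2 : j < L.length), (L[j]'h2).2 ∉ BSet)
    (α0 : MvPolynomial (Fin 3) k ≃ₐ[k] MvPolynomial (Fin 3) k) (h0 : IsAffine α0) :
    GoalProp Φ (α0 * blocks Φ L) := by
  have hs : 1 ≤ L.length := List.length_pos_iff.2 hne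
  refine ⟨L.length, hs, (fun i => (L.get i).1),
    Fin.cases α0 (fun i => (L.get i).2), fun i => (hL _ (L.get_mem _)).1, ?_, ?_, ?_, ?_⟩
  · exact h0
  · have : Fin.last L.length = Fin.succ ⟨L.length - 1, by omega⟩ := by
      ext; simp; omega
    rw [this]
    simp only [Fin.cases_succ]
    exact (hL _ (L.get_mem _)).2
  · intro i hi0 his
    have : i = Fin.succ ⟨(i : ℕ) - 1, by omega⟩ := by
      ext; simp; omega
    rw [this]
    simp only [Fin.cases_succ]
    refine ⟨(hL _ (L.get_mem _)).2, ?_⟩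
    have := hmid ((i : ℕ) - 1) (by omega) (by omega)
    simpa [List.get_eq_getElem] using this
  · rw [ofFn_prod_eq]
    simp only [Fin.cases_zero, Fin.cases_succ]
    congr 1
    rw [blocks_as_ofFn]

lemma reduce (hΦ : ∀ u : k, IsExpOf (fun h => u • Del h) (Φ u))
    (hln : ∀ h : MvPolynomial (Fin 3) k, ∃ l : ℕ, Del^[l] h = 0) :
    ∀ (n : ℕ) (L : List (k × (MvPolynomial (Fin 3) k ≃ₐ[k] MvPolynomial (Fin 3) k))),
      L.length ≤ n → (∀ p ∈ L, p.1 ≠ 0 ∧ IsAffine p.2) →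
      ∀ α0, IsAffine α0 →
      IsAffine (α0 * blocks Φ L) ∨ GoalProp Φ (α0 * blocks Φ L) := by
  intro n
  induction n with
  | zero =>
    intro L hlen _ α0 h0
    have : L = [] := List.length_eq_zero_iff.1 (Nat.le_zero.1 hlen)
    subst this
    left
    rw [blocks_nil, mul_one]
    exact h0
  | succ n ih =>
    intro L hlen hL α0 h0
    rcases eq_or_ne L [] with rfl | hne
    · left
      rw [blocks_nil, mul_one]
      exact h0
    by_cases hmid : ∀ (j : ℕ) (hj : j + 1 < L.length) (h2 : j < L.length), (L[j]'h2).2 ∉ BSet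
    · right
      exact construct L hL hne hmid α0 h0
    · push_neg at hmid
      obtain ⟨j, hj, h2, hB⟩ := hmid
      set p := L[j]'h2 with hp
      set q := L[j + 1]'hj with hq
      have hsplit : L = L.take j ++ p :: q :: L.drop (j + 2) := by
        conv_lhs => rw [← List.take_append_drop j L]
        rw [List.drop_eq_getElem_cons h2, List.drop_eq_getElem_cons hj]
      obtain ⟨v, hv, hβ⟩ := hB
      have hpmem : p ∈ L := by rw [hsplit]; exact List.mem_append_right _ (by simp)
      have hqmem : q ∈ L := by rw [hsplit]; exact List.mem_append_right _ (by simp)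
      have hpa := hL p hpmem
      have hqa := hL q hqmem
      have hmerge : Φ p.1 * p.2 * (Φ q.1 * q.2) = Φ (p.1 + q.1 * v ^ 7) * (p.2 * q.2) := by
        have hcomm := beta_comm hΦ hln hβ hv q.1
        calc Φ p.1 * p.2 * (Φ q.1 * q.2) = Φ p.1 * (p.2 * Φ q.1) * q.2 := by
              rw [mul_assoc, mul_assoc, mul_assoc]
          _ = Φ p.1 * (Φ (q.1 * v ^ 7) * p.2) * q.2 := by rw [hcomm]
          _ = (Φ p.1 * Φ (q.1 * v ^ 7)) * (p.2 * q.2) := by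
              rw [mul_assoc, mul_assoc, mul_assoc]
          _ = Φ (p.1 + q.1 * v ^ 7) * (p.2 * q.2) := by rw [Phi_mul hΦ hln]
      have hγa : IsAffine (p.2 * q.2) := affine_mul hpa.2 hqa.2
      have hblocks : blocks Φ L = blocks Φ (L.take j) *
          (Φ (p.1 + q.1 * v ^ 7) * (p.2 * q.2) * blocks Φ (L.drop (j + 2))) := by
        conv_lhs => rw [hsplit]
        rw [blocks_append, blocks_cons, blocks_cons, ← mul_assoc (Φ p.1 * p.2), hmerge,
          mul_assoc]
      have hlen1 : (L.take j).length = j := by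
        rw [List.length_take]; omega
      have hlen2 : (L.drop (j + 2)).length = L.length - (j + 2) := by
        rw [List.length_drop]
      by_cases hw : p.1 + q.1 * v ^ 7 ≠ 0
      · set L' := L.take j ++ (p.1 + q.1 * v ^ 7, p.2 * q.2) :: L.drop (j + 2) with hL'
        have hblocks' : blocks Φ L = blocks Φ L' := by
          rw [hL', blocks_append, blocks_cons, hblocks]
        have hcond : ∀ r ∈ L', r.1 ≠ 0 ∧ IsAffine r.2 := by
          intro r hr
          rcases List.mem_append.1 hr with hr | hr
          · exact hL r (List.mem_of_mem_take hr)
          · rcases List.mem_cons.1 hr with rfl | hr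
            · exact ⟨hw, hγa⟩
            · exact hL r (List.mem_of_mem_drop hr)
        have hlen' : L'.length ≤ n := by
          rw [hL']
          simp only [List.length_append, List.length_cons, hlen1, hlen2]
          omega
        rw [hblocks']
        exact ih L' hlen' hcond α0 h0
      · push_neg at hw
        rw [hw, Phi_zero hΦ hln, one_mul] at hblocks
        rcases List.eq_nil_or_concat (L.take j) with h1 | ⟨M, r, hMr⟩
        · rw [h1, blocks_nil, one_mul] at hblocks
          have : α0 * blocks Φ L = (α0 * (p.2 * q.2)) * blocks Φ (L.drop (j + 2)) := by
            rw [hblocks, ← mul_assoc]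
          rw [this]
          refine ih (L.drop (j + 2)) (by omega) (fun r hr => hL r (List.mem_of_mem_drop hr))
            _ (affine_mul h0 hγa)
        · set L' := M ++ (r.1, r.2 * (p.2 * q.2)) :: L.drop (j + 2) with hL'
          have hrmem : r ∈ L := by
            apply List.mem_of_mem_take (l := L) (i := j)
            rw [hMr, List.concat_eq_append]
            exact List.mem_append_right _ (by simp)
          have hra := hL r hrmem
          have hblocks' : blocks Φ L = blocks Φ L' := by
            rw [hblocks, hMr, blocks_concat, hL', blocks_append, blocks_cons]
            simp only [mul_assoc]
          have hcond : ∀ t ∈ L', t.1 ≠ 0 ∧ IsAffine t.2 := by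
            intro t ht
            rcases List.mem_append.1 ht with ht | ht
            · refine hL t (List.mem_of_mem_take (i := j) ?_)
              rw [hMr, List.concat_eq_append]
              exact List.mem_append_left _ ht
            · rcases List.mem_cons.1 ht with rfl | ht
              · exact ⟨hra.1, affine_mul hra.2 hγa⟩
              · exact hL t (List.mem_of_mem_drop ht)
          have hlenM : M.length + 1 = j := by
            have := congrArg List.length hMr
            rw [List.concat_eq_append, List.length_append] at this
            simp at this
            omega
          have hlen' : L'.length ≤ n := by
            rw [hL']
            simp only [List.length_append, List.length_cons, hlen2]
            omega
          rw [hblocks']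
          exact ih L' hlen' hcond α0 h0

end Main

/-- Every `θ ∈ ⟨φ, Aff_3(k)⟩ \ Aff_3(k)` can be written as
`θ = α_0 ∘ φ_{u_1} ∘ α_1 ∘ ⋯ ∘ α_{s-1} ∘ φ_{u_s} ∘ α_s` with `s ≥ 1`,
`u_1,…,u_s ∈ k^*`, `α_0, α_s ∈ Aff_3(k)` and `α_1,…,α_{s-1} ∈ Aff_3(k) \ B`. -/
theorem statement12 [CharZero k]
    (hln : ∀ h : MvPolynomial (Fin 3) k, ∃ l : ℕ, Del^[l] h = 0)
    (Φ : k → (MvPolynomial (Fin 3) k ≃ₐ[k] MvPolynomial (Fin 3) k))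
    (hΦ : ∀ u : k, IsExpOf (fun h => u • Del h) (Φ u))
    (θ : MvPolynomial (Fin 3) k ≃ₐ[k] MvPolynomial (Fin 3) k)
    (hθ : θ ∈ Subgroup.closure ({Φ 1} ∪ AffSet))
    (hθA : ¬ IsAffine θ) :
    ∃ s : ℕ, 1 ≤ s ∧
      ∃ (u : Fin s → k) (α : Fin (s + 1) → (MvPolynomial (Fin 3) k ≃ₐ[k] MvPolynomial (Fin 3) k)),
        (∀ i, u i ≠ 0) ∧
        IsAffine (α 0) ∧ IsAffine (α (Fin.last s)) ∧
        (∀ i : Fin (s + 1), 0 < (i : ℕ) → (i : ℕ) < s → IsAffine (α i) ∧ α i ∉ BSet) ∧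
        θ = (List.ofFn fun i : Fin s => α i.castSucc * Φ (u i)).prod * α (Fin.last s) := by
  obtain ⟨α0, L, h0, hL, rfl⟩ := NF_closure hΦ hln hθ
  rcases reduce hΦ hln L.length L le_rfl hL α0 h0 with h | h
  · exact absurd h hθA
  · exact h

end YasudaPaper
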